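/- Let y ∈ ℝᵐ with y_j ≥ 0 for all j, α > 0, and A ∈ ℝ^{m×n} with nonnegative entries such that Ax ∈ ℝᵐ₊₊ whenever x ∈ ℝⁿ₊₊. Define the Poisson data-fidelity f(x) = ∑_{j=1}^m [y_j log(y_j/(α(Ax)_j)) + α(Ax)_j − y_j] and Burg's entropy h(x) = −∑_{i=1}^n log(x_i). Then for every L ≥ ‖y‖₁ = ∑_j y_j, the function L·h − f is convex on ℝⁿ₊₊. -/

import Mathlib

open Finset Real

private lemma pos_comb {θ τ p q : ℝ} (hθ : 0 ≤ θ) (hτ : 0 ≤ τ) (hθτ : θ + τ = 1)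
    (hp : 0 < p) (hq : 0 < q) : 0 < θ * p + τ * q := by
  rcases hθ.eq_or_lt with h | h
  · have : τ = 1 := by linarith
    rw [← h, this]; simpa using hq
  · have h1 : 0 ≤ τ * q := mul_nonneg hτ hq.le
    nlinarith

private lemma holder2 {ι : Type*} (s : Finset ι) (a b c : ι → ℝ) {θ τ : ℝ}
    (hθ : 0 ≤ θ) (hτ : 0 ≤ τ) (hθτ : θ + τ = 1)
    (ha : ∀ i ∈ s, 0 ≤ a i) (hb : ∀ i ∈ s, 0 ≤ b i) (hc : ∀ i ∈ s, 0 ≤ c i)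
    (hB : 0 < ∑ i ∈ s, a i * b i) (hC : 0 < ∑ i ∈ s, a i * c i) :
    ∑ i ∈ s, a i * (b i ^ θ * c i ^ τ) ≤
      (∑ i ∈ s, a i * b i) ^ θ * (∑ i ∈ s, a i * c i) ^ τ := by
  set B := ∑ i ∈ s, a i * b i with hBdef
  set C := ∑ i ∈ s, a i * c i with hCdef
  have hBC : (0:ℝ) < B ^ θ * C ^ τ := mul_pos (rpow_pos_of_pos hB θ) (rpow_pos_of_pos hC τ)
  calc ∑ i ∈ s, a i * (b i ^ θ * c i ^ τ)
      ≤ ∑ i ∈ s, B ^ θ * C ^ τ * (a i * (θ * (b i / B) + τ * (c i / C))) := by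
        refine Finset.sum_le_sum fun i hi => ?_
        have hgm : (b i / B) ^ θ * (c i / C) ^ τ ≤ θ * (b i / B) + τ * (c i / C) :=
          Real.geom_mean_le_arith_mean2_weighted hθ hτ
            (div_nonneg (hb i hi) hB.le) (div_nonneg (hc i hi) hC.le) hθτ
        have hrw : b i ^ θ * c i ^ τ = B ^ θ * C ^ τ * ((b i / B) ^ θ * (c i / C) ^ τ) := by
          rw [Real.div_rpow (hb i hi) hB.le, Real.div_rpow (hc i hi) hC.le]
          have h1 : B ^ θ ≠ 0 := (rpow_pos_of_pos hB θ).ne'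
          have h2 : C ^ τ ≠ 0 := (rpow_pos_of_pos hC τ).ne'
          field_simp
        rw [hrw]
        have := mul_le_mul_of_nonneg_left hgm (ha i hi)
        nlinarith [ha i hi, hBC]
    _ = B ^ θ * C ^ τ * (θ / B * ∑ i ∈ s, a i * b i + τ / C * ∑ i ∈ s, a i * c i) := by
        rw [← Finset.mul_sum]
        congr 1
        rw [Finset.mul_sum, Finset.mul_sum, ← Finset.sum_add_distrib]
        exact Finset.sum_congr rfl fun i _ => by ring
    _ = B ^ θ * C ^ τ := by
        rw [div_mul_cancel₀ θ hB.ne', div_mul_cancel₀ τ hC.ne', hθτ, mul_one]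

private lemma log_concave2 {θ τ p q : ℝ} (hθ : 0 ≤ θ) (hτ : 0 ≤ τ) (hθτ : θ + τ = 1)
    (hp : 0 < p) (hq : 0 < q) :
    θ * Real.log p + τ * Real.log q ≤ Real.log (θ * p + τ * q) := by
  have h := Real.geom_mean_le_arith_mean2_weighted hθ hτ hp.le hq.le hθτ
  have h2 : Real.log (p ^ θ * q ^ τ) ≤ Real.log (θ * p + τ * q) :=
    (Real.log_le_log_iff (mul_pos (rpow_pos_of_pos hp θ) (rpow_pos_of_pos hq τ))
      (lt_of_lt_of_le (mul_pos (rpow_pos_of_pos hp θ) (rpow_pos_of_pos hq τ)) h)).mpr h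
  rwa [Real.log_mul (by positivity) (by positivity), Real.log_rpow hp, Real.log_rpow hq] at h2

private lemma keyIneq {n : ℕ} (a u v : Fin n → ℝ) {θ τ : ℝ}
    (ha : ∀ i, 0 ≤ a i) (hu : ∀ i, 0 < u i) (hv : ∀ i, 0 < v i)
    (hθ : 0 ≤ θ) (hτ : 0 ≤ τ) (hθτ : θ + τ = 1)
    (hau : 0 < ∑ i, a i * u i) (hav : 0 < ∑ i, a i * v i) :
    Real.log (∑ i, a i * (θ * u i + τ * v i)) - ∑ i, Real.log (θ * u i + τ * v i) ≤
      θ * (Real.log (∑ i, a i * u i) - ∑ i, Real.log (u i)) +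
      τ * (Real.log (∑ i, a i * v i) - ∑ i, Real.log (v i)) := by
  classical
  set w : Fin n → ℝ := fun i => θ * u i + τ * v i with hwdef
  have hw : ∀ i, 0 < w i := fun i => pos_comb hθ hτ hθτ (hu i) (hv i)
  -- rewrite each side using R x = (∑ a x)/(∏ x)
  have hR : ∀ (x : Fin n → ℝ), (∀ i, 0 < x i) →
      (∑ i, a i * x i) / (∏ i, x i) = ∑ i, a i * (∏ k ∈ univ.erase i, x k)⁻¹ := by
    intro x hx
    rw [Finset.sum_div]
    refine Finset.sum_congr rfl fun i _ => ?_
    have hprod : (∏ k, x k) = x i * ∏ k ∈ univ.erase i, x k :=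
      (Finset.mul_prod_erase univ x (mem_univ i)).symm
    have hQ : 0 < ∏ k ∈ univ.erase i, x k := Finset.prod_pos fun k _ => hx k
    rw [hprod]
    have h1 : x i ≠ 0 := (hx i).ne'
    have h2 : (∏ k ∈ univ.erase i, x k) ≠ 0 := hQ.ne'
    field_simp
  have hlogR : ∀ (x : Fin n → ℝ), (∀ i, 0 < x i) → 0 < ∑ i, a i * x i →
      Real.log (∑ i, a i * x i) - ∑ i, Real.log (x i) =
        Real.log ((∑ i, a i * x i) / ∏ i, x i) := by
    intro x hx hs
    have hP : 0 < ∏ i, x i := Finset.prod_pos fun i _ => hx i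
    rw [Real.log_div (ne_of_gt hs) (ne_of_gt hP),
      Real.log_prod fun i _ => (hx i).ne']
  have haw : 0 < ∑ i, a i * w i := by
    have : ∑ i, a i * w i = θ * ∑ i, a i * u i + τ * ∑ i, a i * v i := by
      rw [Finset.mul_sum, Finset.mul_sum, ← Finset.sum_add_distrib]
      exact Finset.sum_congr rfl fun i _ => by simp [hwdef]; ring
    rw [this]; exact pos_comb hθ hτ hθτ hau hav
  rw [hlogR u hu hau, hlogR v hv hav]
  have hgoal := hlogR w hw haw
  simp only [hwdef] at hgoal ⊢
  rw [hgoal]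
  set Ru := (∑ i, a i * u i) / ∏ i, u i with hRu
  set Rv := (∑ i, a i * v i) / ∏ i, v i with hRv
  have hRupos : 0 < Ru := div_pos hau (Finset.prod_pos fun i _ => hu i)
  have hRvpos : 0 < Rv := div_pos hav (Finset.prod_pos fun i _ => hv i)
  have key : (∑ i, a i * (θ * u i + τ * v i)) / ∏ i, (θ * u i + τ * v i) ≤
      Ru ^ θ * Rv ^ τ := by
    have h1 : (∑ i, a i * (θ * u i + τ * v i)) / ∏ i, (θ * u i + τ * v i)
        = ∑ i, a i * (∏ k ∈ univ.erase i, w k)⁻¹ := hR w hw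
    rw [h1]
    have hstep1 : ∀ i : Fin n, (∏ k ∈ univ.erase i, w k)⁻¹ ≤
        ((∏ k ∈ univ.erase i, u k)⁻¹) ^ θ * ((∏ k ∈ univ.erase i, v k)⁻¹) ^ τ := by
      intro i
      have hQu : 0 < ∏ k ∈ univ.erase i, u k := Finset.prod_pos fun k _ => hu k
      have hQv : 0 < ∏ k ∈ univ.erase i, v k := Finset.prod_pos fun k _ => hv k
      have hprodle : (∏ k ∈ univ.erase i, u k) ^ θ * (∏ k ∈ univ.erase i, v k) ^ τ ≤
          ∏ k ∈ univ.erase i, w k := by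
        rw [← Real.finset_prod_rpow _ _ (fun k _ => (hu k).le),
          ← Real.finset_prod_rpow _ _ (fun k _ => (hv k).le), ← Finset.prod_mul_distrib]
        refine Finset.prod_le_prod (fun k _ => mul_nonneg (Real.rpow_nonneg (hu k).le θ) (Real.rpow_nonneg (hv k).le τ)) fun k _ => ?_
        exact Real.geom_mean_le_arith_mean2_weighted hθ hτ (hu k).le (hv k).le hθτ
      have hpos : 0 < (∏ k ∈ univ.erase i, u k) ^ θ * (∏ k ∈ univ.erase i, v k) ^ τ :=
        mul_pos (rpow_pos_of_pos hQu θ) (rpow_pos_of_pos hQv τ)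
      have := inv_anti₀ hpos hprodle
      rwa [mul_inv, ← Real.inv_rpow hQu.le, ← Real.inv_rpow hQv.le] at this
    calc ∑ i, a i * (∏ k ∈ univ.erase i, w k)⁻¹
        ≤ ∑ i, a i * (((∏ k ∈ univ.erase i, u k)⁻¹) ^ θ *
            ((∏ k ∈ univ.erase i, v k)⁻¹) ^ τ) :=
          Finset.sum_le_sum fun i _ => mul_le_mul_of_nonneg_left (hstep1 i) (ha i)
      _ ≤ (∑ i, a i * (∏ k ∈ univ.erase i, u k)⁻¹) ^ θ *
            (∑ i, a i * (∏ k ∈ univ.erase i, v k)⁻¹) ^ τ := by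
          refine holder2 univ a _ _ hθ hτ hθτ (fun i _ => ha i)
            (fun i _ => inv_nonneg.mpr (Finset.prod_nonneg fun k _ => (hu k).le))
            (fun i _ => inv_nonneg.mpr (Finset.prod_nonneg fun k _ => (hv k).le)) ?_ ?_
          · rw [← hR u hu]; exact hRupos
          · rw [← hR v hv]; exact hRvpos
      _ = Ru ^ θ * Rv ^ τ := by rw [hRu, hRv, hR u hu, hR v hv]
  have hlast : Real.log ((∑ i, a i * (θ * u i + τ * v i)) / ∏ i, (θ * u i + τ * v i)) ≤
      Real.log (Ru ^ θ * Rv ^ τ) := by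
    have hwpos : 0 < (∑ i, a i * (θ * u i + τ * v i)) / ∏ i, (θ * u i + τ * v i) := by
      have hPw : 0 < ∏ i, w i := Finset.prod_pos fun i _ => hw i
      have := div_pos haw hPw
      simpa [hwdef] using this
    exact (Real.log_le_log_iff hwpos (lt_of_lt_of_le hwpos key)).mpr key
  calc Real.log ((∑ i, a i * (θ * u i + τ * v i)) / ∏ i, (θ * u i + τ * v i))
      ≤ Real.log (Ru ^ θ * Rv ^ τ) := hlast
    _ = θ * Real.log Ru + τ * Real.log Rv := by
        rw [Real.log_mul (by positivity) (by positivity), Real.log_rpow hRupos,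
          Real.log_rpow hRvpos]

private lemma perterm {y α t : ℝ} (hy : 0 ≤ y) (hα : 0 < α) (ht : 0 < t) :
    y * Real.log (y / (α * t)) + α * t - y =
      -(y * Real.log t) + α * t - (y + y * Real.log α - y * Real.log y) := by
  rcases hy.eq_or_lt with h | h
  · simp [← h]
  · rw [Real.log_div h.ne' (by positivity), Real.log_mul hα.ne' ht.ne']
    ring

theorem stmt5 {m n : ℕ} (A : Matrix (Fin m) (Fin n) ℝ) (y : Fin m → ℝ) (α L : ℝ)
    (hy : ∀ j, 0 ≤ y j) (hα : 0 < α) (hA : ∀ j i, 0 ≤ A j i)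
    (hpos : ∀ x : Fin n → ℝ, (∀ i, 0 < x i) → ∀ j, 0 < A.mulVec x j)
    (hL : ∑ j, y j ≤ L) :
    ConvexOn ℝ {x : Fin n → ℝ | ∀ i, 0 < x i}
      (fun x => L * (-∑ i, Real.log (x i)) -
        ∑ j, (y j * Real.log (y j / (α * A.mulVec x j)) + α * A.mulVec x j - y j)) := by
  classical
  set S := ∑ j, y j with hSdef
  set Cc := ∑ j, (y j + y j * Real.log α - y j * Real.log (y j)) with hCcdef
  -- value identity
  have hFval : ∀ x : Fin n → ℝ, (∀ i, 0 < x i) →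
      L * (-∑ i, Real.log (x i)) -
        ∑ j, (y j * Real.log (y j / (α * A.mulVec x j)) + α * A.mulVec x j - y j) =
      (L - S) * (-∑ i, Real.log (x i)) +
        (∑ j, y j * (Real.log (A.mulVec x j) - ∑ i, Real.log (x i))) -
        α * (∑ j, A.mulVec x j) + Cc := by
    intro x hx
    have ht : ∀ j, 0 < A.mulVec x j := hpos x hx
    have h1 : ∑ j, (y j * Real.log (y j / (α * A.mulVec x j)) + α * A.mulVec x j - y j) =
        ∑ j, (-(y j * Real.log (A.mulVec x j)) + α * A.mulVec x j -
          (y j + y j * Real.log α - y j * Real.log (y j))) :=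
      Finset.sum_congr rfl fun j _ => perterm (hy j) hα (ht j)
    rw [h1]
    have h2 : ∑ j, (-(y j * Real.log (A.mulVec x j)) + α * A.mulVec x j -
          (y j + y j * Real.log α - y j * Real.log (y j))) =
        -(∑ j, y j * Real.log (A.mulVec x j)) + α * (∑ j, A.mulVec x j) - Cc := by
      rw [hCcdef, Finset.mul_sum, Finset.sum_sub_distrib, Finset.sum_add_distrib,
        Finset.sum_neg_distrib]
    rw [h2]
    have h3 : ∑ j, y j * (Real.log (A.mulVec x j) - ∑ i, Real.log (x i)) =
        (∑ j, y j * Real.log (A.mulVec x j)) - S * ∑ i, Real.log (x i) := by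
      rw [hSdef, Finset.sum_mul, ← Finset.sum_sub_distrib]
      exact Finset.sum_congr rfl fun j _ => by ring
    rw [h3]
    ring
  constructor
  · have hset : {x : Fin n → ℝ | ∀ i, 0 < x i} =
        Set.univ.pi (fun _ : Fin n => Set.Ioi (0:ℝ)) := by
      ext x; simp [Set.mem_pi]
    rw [hset]
    exact convex_pi fun i _ => convex_Ioi 0
  · intro u hu v hv θ τ hθ hτ hθτ
    simp only [Set.mem_setOf_eq] at hu hv
    set w : Fin n → ℝ := fun i => θ * u i + τ * v i with hwdef
    have hwe : θ • u + τ • v = w := by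
      funext i; simp [hwdef, smul_eq_mul]
    have hw : ∀ i, 0 < w i := fun i => pos_comb hθ hτ hθτ (hu i) (hv i)
    rw [hwe]
    simp only [smul_eq_mul]
    rw [hFval u hu, hFval v hv, hFval w hw]
    -- mulVec linearity
    have hmv : ∀ (x : Fin n → ℝ) j, A.mulVec x j = ∑ i, A j i * x i := by
      intro x j; simp [Matrix.mulVec, dotProduct]
    have hlin : ∀ j, A.mulVec w j = θ * A.mulVec u j + τ * A.mulVec v j := by
      intro j
      simp only [hmv, hwdef]
      rw [Finset.mul_sum, Finset.mul_sum, ← Finset.sum_add_distrib]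
      exact Finset.sum_congr rfl fun i _ => by ring
    have hT : (∑ j, A.mulVec w j) = θ * (∑ j, A.mulVec u j) + τ * (∑ j, A.mulVec v j) := by
      rw [Finset.mul_sum, Finset.mul_sum, ← Finset.sum_add_distrib]
      exact Finset.sum_congr rfl fun j _ => hlin j
    -- H part
    have hH : (-∑ i, Real.log (w i)) ≤ θ * (-∑ i, Real.log (u i)) + τ * (-∑ i, Real.log (v i)) := by
      have : θ * (∑ i, Real.log (u i)) + τ * (∑ i, Real.log (v i)) ≤ ∑ i, Real.log (w i) := by
        rw [Finset.mul_sum, Finset.mul_sum, ← Finset.sum_add_distrib]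
        exact Finset.sum_le_sum fun i _ => log_concave2 hθ hτ hθτ (hu i) (hv i)
      linarith
    -- G part
    have hGj : ∀ j, y j * (Real.log (A.mulVec w j) - ∑ i, Real.log (w i)) ≤
        θ * (y j * (Real.log (A.mulVec u j) - ∑ i, Real.log (u i))) +
        τ * (y j * (Real.log (A.mulVec v j) - ∑ i, Real.log (v i))) := by
      intro j
      have hkey := keyIneq (A j) u v (hA j) hu hv hθ hτ hθτ
        (by rw [← hmv u j]; exact hpos u hu j) (by rw [← hmv v j]; exact hpos v hv j)
      have h0 := mul_le_mul_of_nonneg_left hkey (hy j)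
      simp only [hmv, hwdef]
      nlinarith [h0]
    have hG : (∑ j, y j * (Real.log (A.mulVec w j) - ∑ i, Real.log (w i))) ≤
        θ * (∑ j, y j * (Real.log (A.mulVec u j) - ∑ i, Real.log (u i))) +
        τ * (∑ j, y j * (Real.log (A.mulVec v j) - ∑ i, Real.log (v i))) := by
      rw [Finset.mul_sum, Finset.mul_sum, ← Finset.sum_add_distrib]
      exact Finset.sum_le_sum fun j _ => hGj j
    have hLS : 0 ≤ L - S := by linarith
    have h1 := mul_le_mul_of_nonneg_left hH hLS
    have hτ1 : τ = 1 - θ := by linarith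
    subst hτ1
    nlinarith [h1, hG, hT]
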